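/- Let Q = T[H_1, …, H_t] be a strong semicomplete composition with T ∉ T_1. Then every minimal separator S of Q induces in the complement of the underlying undirected graph of Q a subgraph which consists of some connected components of that complement. Moreover, each vertex s ∈ S is adjacent in Q to every vertex of Q − S. -/

import Mathlib

/-- A digraph on vertex type `V`: an arbitrary set of arcs (ordered pairs). -/
structure Digr (V : Type*) where
  Adj : V → V → Prop

namespace Digr

variable {V : Type*}

/-- A digraph is strong if every vertex can reach every other vertex by a directed path. -/
def IsStrong (D : Digr V) : Prop := ∀ x y : V, Relation.ReflTransGen D.Adj x y

/-- A digraph is semicomplete if there is at least one arc between any two distinct vertices. -/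
def IsSemicomplete (D : Digr V) : Prop := ∀ x y : V, x ≠ y → (D.Adj x y ∨ D.Adj y x)

/-- The digraph obtained by deleting a set `S` of vertices. -/
def del (D : Digr V) (S : Set V) : Digr {v : V // v ∉ S} :=
  ⟨fun x y => D.Adj x.1 y.1⟩

/-- `S` is a separator of `D` if `D - S` is not strong. -/
def IsSeparator (D : Digr V) (S : Set V) : Prop := ¬ (D.del S).IsStrong

/-- A separator is minimal if no proper subset of it is a separator. -/
def IsMinimalSeparator (D : Digr V) (S : Set V) : Prop :=
  D.IsSeparator S ∧ ∀ S' : Set V, S' ⊂ S → ¬ D.IsSeparator S'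

/-- A digraph is `k`-strong-connected if every separator has at least `k` vertices. -/
def IsKStrong (D : Digr V) (k : ℕ) : Prop := ∀ S : Set V, D.IsSeparator S → k ≤ S.ncard

/-- The complement of the underlying undirected graph of a digraph. -/
def complG (D : Digr V) : SimpleGraph V where
  Adj x y := x ≠ y ∧ ¬ D.Adj x y ∧ ¬ D.Adj y x
  symm := ⟨fun x y h => ⟨Ne.symm h.1, h.2.2, h.2.1⟩⟩
  loopless := ⟨fun x h => h.1 rfl⟩

/-- `s` is the vertex set of a connected component of the complement of the
underlying undirected graph of `D`. -/
def IsComplComponent (D : Digr V) (s : Set V) : Prop :=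
  s.Nonempty ∧ (∀ x ∈ s, ∀ y ∈ s, D.complG.Reachable x y) ∧
    (∀ x ∈ s, ∀ y : V, D.complG.Reachable x y → y ∈ s)

/-- A (directed) path, given as its list of vertices. -/
def IsPathList (D : Digr V) (l : List V) : Prop :=
  l ≠ [] ∧ l.Nodup ∧ l.Chain' D.Adj

/-- A (directed) cycle, given as its list of vertices. -/
def IsCycleList (D : Digr V) (l : List V) : Prop :=
  2 ≤ l.length ∧ l.Nodup ∧ (l ++ l.take 1).Chain' D.Adj

/-- A Hamiltonian (directed) path. -/
def HasHamPath (D : Digr V) : Prop := ∃ l : List V, D.IsPathList l ∧ ∀ v : V, v ∈ l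

/-- A Hamiltonian (directed) cycle. -/
def HasHamCycle (D : Digr V) : Prop := ∃ l : List V, D.IsCycleList l ∧ ∀ v : V, v ∈ l

/-- A `k`-path subdigraph: `k` pairwise vertex-disjoint directed paths. -/
def IsKPathSub (D : Digr V) (k : ℕ) (P : Fin k → List V) : Prop :=
  (∀ j, D.IsPathList (P j)) ∧ ∀ j j' : Fin k, j ≠ j' → ∀ v : V, v ∈ P j → v ∉ P j'

/-- A cycle subdigraph: a collection of pairwise vertex-disjoint directed cycles. -/
def IsCycleSub (D : Digr V) (c : ℕ) (C : Fin c → List V) : Prop :=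
  (∀ j, D.IsCycleList (C j)) ∧ ∀ j j' : Fin c, j ≠ j' → ∀ v : V, v ∈ C j → v ∉ C j'

/-- The set of vertices covered by a family of paths/cycles. -/
def lverts {k : ℕ} (P : Fin k → List V) : Set V := {v : V | ∃ j, v ∈ P j}

/-- A maximum `k`-path subdigraph: one covering the largest number of vertices. -/
def IsMaxKPathSub (D : Digr V) (k : ℕ) (P : Fin k → List V) : Prop :=
  D.IsKPathSub k P ∧
    ∀ P' : Fin k → List V, D.IsKPathSub k P' → (lverts P').ncard ≤ (lverts P).ncard

/-- The path covering number: the least `k` such that `D` has a spanning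
collection of `k` pairwise disjoint directed paths. -/
noncomputable def pc (D : Digr V) : ℕ :=
  sInf {k : ℕ | ∃ P : Fin k → List V, D.IsKPathSub k P ∧ ∀ v : V, ∃ j, v ∈ P j}

/-- A digraph is acyclic if it has no (nontrivial) closed directed walk. -/
def IsAcyclic (D : Digr V) : Prop := ∀ v : V, ¬ Relation.TransGen D.Adj v v

/-- `D'` is a spanning subdigraph of `D` (same vertex set, a subset of the arcs). -/
def IsSpanningSubdigraph (D' D : Digr V) : Prop := ∀ x y : V, D'.Adj x y → D.Adj x y

/-- The number of arcs of a digraph. -/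
noncomputable def arcCount (D : Digr V) : ℕ := {p : V × V | D.Adj p.1 p.2}.ncard

/-- The composition `T[H 0, …, H (t-1)]` of digraphs. -/
def comp {t : ℕ} (T : Digr (Fin t)) {β : Fin t → Type*} (H : ∀ i, Digr (β i)) :
    Digr ((i : Fin t) × β i) :=
  ⟨fun x y => (∃ h : x.1 = y.1, (H y.1).Adj (h ▸ x.2) y.2) ∨ (x.1 ≠ y.1 ∧ T.Adj x.1 y.1)⟩

/-- The digraph `H_k(D)`: add vertices `x_1, …, x_k` (the left summand of `Fin k ⊕ Fin k`)
and `y_1, …, y_k` (the right summand), all arcs from `V(D)` to each `x_i`, from each `y_j`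
to `V(D)`, and all arcs `x_i y_j`. -/
def HkD (D : Digr V) (k : ℕ) : Digr (V ⊕ (Fin k ⊕ Fin k)) :=
  ⟨fun x y =>
    match x, y with
    | Sum.inl a, Sum.inl b => D.Adj a b
    | Sum.inl _, Sum.inr (Sum.inl _) => True
    | Sum.inr (Sum.inr _), Sum.inl _ => True
    | Sum.inr (Sum.inl _), Sum.inr (Sum.inr _) => True
    | _, _ => False⟩

/-- `ε(D)`: the least `k` such that `H_k(D)` is Hamiltonian. -/
noncomputable def eps (D : Digr V) : ℕ := sInf {k : ℕ | (D.HkD k).HasHamCycle}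

/-- Membership in the class `𝒯₁`: some vertex `u` has arcs in both directions
to every other vertex. -/
def memT1 {t : ℕ} (T : Digr (Fin t)) : Prop :=
  ∃ u : Fin t, ∀ v : Fin t, v ≠ u → T.Adj u v ∧ T.Adj v u

/-- `A ⇒ B`: every vertex of `A` dominates every vertex of `B`,
and there is no arc from `B` to `A`. -/
def DomStrict (D : Digr V) (A B : Set V) : Prop :=
  (∀ a ∈ A, ∀ b ∈ B, D.Adj a b) ∧ (∀ b ∈ B, ∀ a ∈ A, ¬ D.Adj b a)

/-- `s` is an independent set: the induced subdigraph has no arcs. -/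
def IndepSet (D : Digr V) (s : Set V) : Prop := ∀ a ∈ s, ∀ b ∈ s, ¬ D.Adj a b

/-- The induced subdigraph on `s` contains a directed path of length 2. -/
def HasP2In (D : Digr V) (s : Set V) : Prop :=
  ∃ a ∈ s, ∃ b ∈ s, ∃ c ∈ s, a ≠ b ∧ b ≠ c ∧ a ≠ c ∧ D.Adj a b ∧ D.Adj b c

/-- A digraph on `n` vertices is pancyclic if it has a cycle of every length
`k` with `3 ≤ k ≤ n`. -/
def Pancyclic [Fintype V] (D : Digr V) : Prop :=
  ∀ m : ℕ, 3 ≤ m → m ≤ Fintype.card V →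
    ∃ l : List V, D.IsCycleList l ∧ l.length = m

/-- `D` has an out-branching: a spanning out-tree. -/
def HasOutBranching (D : Digr V) : Prop :=
  ∃ (B : Digr V) (r : V), B.IsSpanningSubdigraph D ∧
    (∀ v : V, Relation.ReflTransGen B.Adj r v) ∧
    (∀ z : V, ¬ B.Adj z r) ∧ (∀ v : V, v ≠ r → ∃! u : V, B.Adj u v)

/-- `D` has an in-branching: a spanning in-tree. -/
def HasInBranching (D : Digr V) : Prop :=
  ∃ (B : Digr V) (r : V), B.IsSpanningSubdigraph D ∧
    (∀ v : V, Relation.ReflTransGen B.Adj v r) ∧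
    (∀ z : V, ¬ B.Adj r z) ∧ (∀ v : V, v ≠ r → ∃! u : V, B.Adj v u)

end Digr

/-- Key lemma: in a semicomplete composition with `T ∉ 𝒯₁`, every vertex of a
minimal separator is adjacent to every vertex outside the separator. -/
lemma key_lemma {t : ℕ} (T : Digr (Fin t)) {β : Fin t → Type*}
    [hne : ∀ i, Nonempty (β i)] (H : ∀ i, Digr (β i))
    (hsemi : T.IsSemicomplete) (hT1 : ¬ Digr.memT1 T)
    (S : Set ((i : Fin t) × β i)) (hS : (Digr.comp T H).IsMinimalSeparator S) :
    ∀ s ∈ S, ∀ x ∉ S, (Digr.comp T H).Adj s x ∨ (Digr.comp T H).Adj x s := by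
  classical
  set Q := Digr.comp T H with hQdef
  intro s hsS x hxS
  by_contra hcon
  push_neg at hcon
  obtain ⟨h1, h2⟩ := hcon
  -- helpers to convert between Q-arcs and T-arcs
  have hTarc : ∀ u v : (i : Fin t) × β i, Q.Adj u v → u.1 ≠ v.1 → T.Adj u.1 v.1 := by
    intro u v h hne'
    rcases h with ⟨h, _⟩ | ⟨_, h⟩
    · exact absurd h hne'
    · exact h
  have hAdjT : ∀ u v : (i : Fin t) × β i, u.1 ≠ v.1 → T.Adj u.1 v.1 → Q.Adj u v :=
    fun u v hne' h => Or.inr ⟨hne', h⟩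
  -- x and s are in the same class
  have hix : x.1 = s.1 := by
    by_contra hne'
    rcases hsemi s.1 x.1 (fun h => hne' h.symm) with h | h
    · exact h1 (hAdjT s x (fun h' => hne' h'.symm) h)
    · exact h2 (hAdjT x s hne' h)
  obtain ⟨hsep, hmin⟩ := hS
  have hstrongdel : ∀ s' ∈ S, (Q.del (S \ {s'})).IsStrong := by
    intro s' hs'
    exact not_not.mp (hmin _ (Set.sdiff_singleton_ssubset.mpr hs'))
  -- a witness pair for non-strongness of Q - S
  simp only [Digr.IsSeparator, Digr.IsStrong, not_forall] at hsep
  obtain ⟨a, b, hnab⟩ := hsep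
  -- reachability set from a in Q - S
  set R : Set ((i : Fin t) × β i) :=
    {v | ∃ h : v ∉ S, Relation.ReflTransGen (Q.del S).Adj a ⟨v, h⟩} with hRdef
  have haR : a.1 ∈ R := ⟨a.2, Relation.ReflTransGen.refl⟩
  have hbR : b.1 ∉ R := by
    rintro ⟨h, hr⟩
    exact hnab hr
  have hRS : ∀ v, v ∈ R → v ∉ S := fun v hv => hv.elim fun h _ => h
  -- F1 : no arcs from R out of R within Q - S
  have hF1 : ∀ v ∈ R, ∀ w, w ∉ S → w ∉ R → ¬ Q.Adj v w := by
    rintro v ⟨hv, hrv⟩ w hwS hwR hadj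
    exact hwR ⟨hwS, hrv.tail hadj⟩
  -- F2 : every vertex of S has an in-neighbour in R and an out-neighbour outside R
  have hF2 : ∀ s' ∈ S, (∃ p ∈ R, Q.Adj p s') ∧ (∃ q, q ∉ S ∧ q ∉ R ∧ Q.Adj s' q) := by
    intro s' hs'
    have hstr := hstrongdel s' hs'
    have haS : a.1 ∉ S \ {s'} := fun h => a.2 h.1
    have hbS : b.1 ∉ S \ {s'} := fun h => b.2 h.1
    have hreach := hstr ⟨a.1, haS⟩ ⟨b.1, hbS⟩
    constructor
    · have step1 : ∀ c : {v // v ∉ S \ {s'}},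
          Relation.ReflTransGen (Q.del (S \ {s'})).Adj ⟨a.1, haS⟩ c →
          c.1 ∈ R ∨ ∃ p ∈ R, Q.Adj p s' := by
        intro c hc
        induction hc with
        | refl => exact Or.inl haR
        | @tail m c' hmc hstep ih =>
          rcases ih with hm | hex
          · by_cases hcS : c'.1 ∈ S
            · have hcs : c'.1 = s' := by
                by_contra hne'
                exact c'.2 ⟨hcS, hne'⟩
              have h' : Q.Adj m.1 c'.1 := hstep
              rw [hcs] at h'
              exact Or.inr ⟨m.1, hm, h'⟩
            · by_cases hcR : c'.1 ∈ R
              · exact Or.inl hcR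
              · exact absurd hstep (hF1 _ hm _ hcS hcR)
          · exact Or.inr hex
      rcases step1 _ hreach with h | h
      · exact absurd h hbR
      · exact h
    · have step2 : ∀ c : {v // v ∉ S \ {s'}},
          Relation.ReflTransGen (Q.del (S \ {s'})).Adj c ⟨b.1, hbS⟩ →
          (c.1 ∉ S ∧ c.1 ∉ R) ∨ ∃ q, q ∉ S ∧ q ∉ R ∧ Q.Adj s' q := by
        intro c hc
        induction hc using Relation.ReflTransGen.head_induction_on with
        | refl => exact Or.inl ⟨b.2, hbR⟩
        | @head z c' hzc hcb ih =>
          rcases ih with ⟨hcS, hcR⟩ | hex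
          · by_cases hzS : z.1 ∈ S
            · have hzs : z.1 = s' := by
                by_contra hne'
                exact z.2 ⟨hzS, hne'⟩
              have h' : Q.Adj z.1 c'.1 := hzc
              rw [hzs] at h'
              exact Or.inr ⟨c'.1, hcS, hcR, h'⟩
            · by_cases hzR : z.1 ∈ R
              · exact absurd hzc (hF1 _ hzR _ hcS hcR)
              · exact Or.inl ⟨hzS, hzR⟩
          · exact Or.inr hex
      rcases step2 _ hreach with h | h
      · exact absurd haR h.2
      · exact h
  -- specialize to s
  obtain ⟨⟨p₀, hp₀R, hp₀s⟩, ⟨q₀, hq₀S, hq₀R, hsq₀⟩⟩ := hF2 s hsS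
  -- F3 : p₀ and q₀ are in the same class as s
  have hF3 : p₀.1 = s.1 ∧ q₀.1 = s.1 := by
    by_cases hp : p₀.1 = s.1 <;> by_cases hq : q₀.1 = s.1
    · exact ⟨hp, hq⟩
    · have hT := hTarc s q₀ hsq₀ (fun h => hq h.symm)
      have hadj : Q.Adj p₀ q₀ := by
        refine hAdjT _ _ ?_ ?_
        · rw [hp]
          exact fun h => hq h.symm
        · rw [hp]
          exact hT
      exact absurd hadj (hF1 _ hp₀R _ hq₀S hq₀R)
    · have hT := hTarc p₀ s hp₀s hp
      have hadj : Q.Adj p₀ q₀ := by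
        refine hAdjT _ _ ?_ ?_
        · rw [hq]
          exact hp
        · rw [hq]
          exact hT
      exact absurd hadj (hF1 _ hp₀R _ hq₀S hq₀R)
    · have hTp := hTarc p₀ s hp₀s hp
      have hTq := hTarc s q₀ hsq₀ (fun h => hq h.symm)
      have hxR : x ∈ R := by
        by_contra hxR
        refine hF1 _ hp₀R _ hxS hxR (hAdjT _ _ ?_ ?_)
        · rw [hix]; exact hp
        · rw [hix]; exact hTp
      exact (hF1 _ hxR _ hq₀S hq₀R (hAdjT _ _
        (by rw [hix]; exact fun h => hq h.symm) (by rw [hix]; exact hTq))).elim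
  obtain ⟨hp₀i, hq₀i⟩ := hF3
  -- F4 : no T-arcs between R-classes / non-R-classes and the class of s
  have hF4a : ∀ v ∈ R, v.1 ≠ s.1 → ¬ T.Adj v.1 s.1 := by
    intro v hvR hne' hT
    refine hF1 _ hvR _ hq₀S hq₀R (hAdjT v q₀ (fun h => hne' (h.trans hq₀i)) ?_)
    rw [hq₀i]
    exact hT
  have hF4b : ∀ v, v ∉ S → v ∉ R → v.1 ≠ s.1 → ¬ T.Adj s.1 v.1 := by
    intro v hvS hvR hne' hT
    refine hF1 _ hp₀R _ hvS hvR (hAdjT p₀ v ?_ ?_)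
    · rw [hp₀i]
      exact fun h => hne' h.symm
    · rw [hp₀i]
      exact hT
  have hQS : (Q.del (S \ {s})).IsStrong := hstrongdel s hsS
  -- F6a : every vertex of R lies in the class of s
  have hF6a : ∀ v ∈ R, v.1 = s.1 := by
    intro v hvR
    by_contra hne'
    have hvS : v ∉ S := hRS v hvR
    have hvS' : v ∉ S \ {s} := fun h => hvS h.1
    have hq₀S' : q₀ ∉ S \ {s} := fun h => hq₀S h.1
    have hreach := hQS ⟨v, hvS'⟩ ⟨q₀, hq₀S'⟩
    have hall : ∀ c : {u // u ∉ S \ {s}},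
        Relation.ReflTransGen (Q.del (S \ {s})).Adj ⟨v, hvS'⟩ c →
        c.1 ∈ R ∧ c.1.1 ≠ s.1 := by
      intro c hc
      induction hc with
      | refl => exact ⟨hvR, hne'⟩
      | @tail m c' hmc hstep ih =>
        obtain ⟨hmR, hmne⟩ := ih
        by_cases hzi : c'.1.1 = s.1
        · have hT := hTarc m.1 c'.1 hstep (fun h => hmne (h.trans hzi))
          rw [hzi] at hT
          exact absurd hT (hF4a _ hmR hmne)
        · have hzS : c'.1 ∉ S := by
            intro h
            exact c'.2 ⟨h, fun he => hzi (by rw [he])⟩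
          by_cases hzR : c'.1 ∈ R
          · exact ⟨hzR, hzi⟩
          · exact absurd hstep (hF1 _ hmR _ hzS hzR)
    exact (hall _ hreach).2 hq₀i
  -- F6b : every vertex outside S ∪ R lies in the class of s
  have hF6b : ∀ v, v ∉ S → v ∉ R → v.1 = s.1 := by
    intro v hvS hvR
    by_contra hne'
    have hvS' : v ∉ S \ {s} := fun h => hvS h.1
    have hp₀S : p₀ ∉ S := hRS p₀ hp₀R
    have hp₀S' : p₀ ∉ S \ {s} := fun h => hp₀S h.1
    have hreach := hQS ⟨p₀, hp₀S'⟩ ⟨v, hvS'⟩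
    have hall : ∀ c : {u // u ∉ S \ {s}},
        Relation.ReflTransGen (Q.del (S \ {s})).Adj c ⟨v, hvS'⟩ →
        c.1 ∉ S ∧ c.1 ∉ R ∧ c.1.1 ≠ s.1 := by
      intro c hc
      induction hc using Relation.ReflTransGen.head_induction_on with
      | refl => exact ⟨hvS, hvR, hne'⟩
      | @head z c' hzc hcb ih =>
        obtain ⟨hcS, hcR, hcne⟩ := ih
        by_cases hzi : z.1.1 = s.1
        · have hT := hTarc z.1 c'.1 hzc (fun h => hcne (h.symm.trans hzi))
          rw [hzi] at hT
          exact absurd hT (hF4b _ hcS hcR hcne)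
        · have hzS : z.1 ∉ S := by
            intro h
            exact z.2 ⟨h, fun he => hzi (by rw [he])⟩
          by_cases hzR : z.1 ∈ R
          · exact absurd hzc (hF1 _ hzR _ hcS hcR)
          · exact ⟨hzS, hzR, hzi⟩
    exact (hall _ hreach).2.2 hp₀i
  -- conclude that T ∈ 𝒯₁, a contradiction
  refine hT1 ⟨s.1, fun j hj => ?_⟩
  obtain ⟨y⟩ := hne j
  have hvS : (⟨j, y⟩ : (i : Fin t) × β i) ∈ S := by
    by_contra hvS
    by_cases hvR : (⟨j, y⟩ : (i : Fin t) × β i) ∈ R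
    · exact hj (hF6a _ hvR)
    · exact hj (hF6b _ hvS hvR)
  obtain ⟨⟨p', hp'R, hp's⟩, ⟨q', hq'S, hq'R, hsq'⟩⟩ := hF2 _ hvS
  have hp'i := hF6a p' hp'R
  have hq'i := hF6b q' hq'S hq'R
  constructor
  · have hT := hTarc p' ⟨j, y⟩ hp's (by rw [hp'i]; exact fun h => hj h.symm)
    rwa [hp'i] at hT
  · have hT := hTarc ⟨j, y⟩ q' hsq' (show j ≠ q'.1 by rw [hq'i]; exact hj)
    rwa [hq'i] at hT

/-- In a strong semicomplete composition with `T ∉ 𝒯₁`, every minimal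
separator `S` is a union of connected components of the complement of the underlying
graph, and every vertex of `S` is adjacent to every vertex outside `S`. -/
theorem stmt_1 {t : ℕ} (ht : 2 ≤ t) (T : Digr (Fin t)) {β : Fin t → Type*}
    [∀ i, Nonempty (β i)] (H : ∀ i, Digr (β i))
    (hsemi : T.IsSemicomplete) (hT1 : ¬ Digr.memT1 T)
    (hstrong : (Digr.comp T H).IsStrong)
    (S : Set ((i : Fin t) × β i)) (hS : (Digr.comp T H).IsMinimalSeparator S) :
    (∀ s ∈ S, ∀ y : (i : Fin t) × β i,
        (Digr.comp T H).complG.Reachable s y → y ∈ S) ∧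
    (∀ s ∈ S, ∀ x : (i : Fin t) × β i, x ∉ S →
        (Digr.comp T H).Adj s x ∨ (Digr.comp T H).Adj x s) := by
  have key := key_lemma T H hsemi hT1 S hS
  have hstep : ∀ z ∈ S, ∀ w, (Digr.comp T H).complG.Adj z w → w ∈ S := by
    intro z hz w hadj
    by_contra hw
    rcases key z hz w hw with h | h
    · exact hadj.2.1 h
    · exact hadj.2.2 h
  constructor
  · intro s hs y hr
    obtain ⟨w⟩ := hr
    have hwalk : ∀ (u v : (i : Fin t) × β i) (w : (Digr.comp T H).complG.Walk u v),
        u ∈ S → v ∈ S := by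
      intro u v w
      induction w with
      | nil => exact id
      | cons h p ih => exact fun hu => ih (hstep _ hu _ h)
    exact hwalk s y w hs
  · exact key
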